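/- Let V be a finitely generated free module over a commutative ring k with basis (b_i). For a tuple I = (d_1,…,d_n) of positive integers with Σ d_i = d and distinct basis elements b_{i_1},…,b_{i_n}, set (b_{i_1},…,b_{i_n},I) := Σ_{σ ∈ S_d/S_I} σ·(b_{i_1}^{⊗d_1} ⊗ ⋯ ⊗ b_{i_n}^{⊗d_n}), where S_I = Π S_{d_i} ⊆ S_d. Then these elements form a k-basis of the invariant module (V^{⊗d})^{S_d}. -/

import Mathlib

/-!
STATEMENT 1: Let `V` be a finitely generated free module over a commutative ring `k`, with basis
`(b_i)`.  For a tuple `I = (d_1,…,d_n)` of positive integers with `Σ d_i = d` and distinct basis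
elements `b_{i_1},…,b_{i_n}`, the element `(b_{i_1},…,b_{i_n},I)` is the orbit sum under `S_d` of
the pure tensor with `b_{i_s}` in the `d_s` positions of block `s`.  These orbit sums form a
`k`-basis of the invariant module `(V^{⊗d})^{S_d}`.

We encode a tuple `(b_{i_1},…,b_{i_n},I)` by the function `f : Fin d → ι` whose fibers are the
blocks; the associated element is the sum of the pure tensors `⊗ b_{g(i)}` over the `S_d`-orbit
of `f` (i.e. over all `g = f ∘ σ`).  "The elements form a basis" is formalized as: the set of
all these orbit sums is linearly independent and spans the invariant submodule `(V^{⊗d})^{S_d}`.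
-/

open TensorProduct PiTensorProduct

variable (k : Type) [CommRing k]

/-- The action of a permutation `σ ∈ S_d` on the `d`-th tensor power of `V`. -/
noncomputable def permTensorMap (d : ℕ) (V : Type) [AddCommGroup V] [Module k V]
    (σ : Equiv.Perm (Fin d)) :
    (⨂[k] (_ : Fin d), V) →ₗ[k] (⨂[k] (_ : Fin d), V) :=
  (PiTensorProduct.reindex k (fun _ : Fin d => V) σ).toLinearMap

/-- `Γ^d(V) = (V^{⊗d})^{S_d}`, the invariants of the symmetric group acting on the tensor
power by permuting the factors. -/
noncomputable def dividedPower (d : ℕ) (V : Type) [AddCommGroup V] [Module k V] :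
    Submodule k (⨂[k] (_ : Fin d), V) :=
  ⨅ σ : Equiv.Perm (Fin d), LinearMap.ker (permTensorMap k d V σ - LinearMap.id)

open scoped Classical in
/-- The orbit sum `(b_{i_1},…,b_{i_n},I) = Σ_{σ ∈ S_d/S_I} σ·(b_{i_1}^{⊗d_1} ⊗ ⋯ ⊗ b_{i_n}^{⊗d_n})`
associated to `f : Fin d → ι`: the sum of the distinct pure tensors in the `S_d`-orbit
of `⊗_{i} b_{f i}`. -/
noncomputable def orbitSum (d : ℕ) {V : Type} [AddCommGroup V] [Module k V]
    {ι : Type} [Fintype ι] (b : Module.Basis ι k V) (f : Fin d → ι) :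
    ⨂[k] (_ : Fin d), V :=
  ∑ g ∈ Finset.univ.filter (fun g : Fin d → ι => ∃ σ : Equiv.Perm (Fin d), g = f ∘ σ),
    PiTensorProduct.tprod k (fun i => b (g i))

open scoped Classical

section Aux

variable {k} {d : ℕ} {V : Type} [AddCommGroup V] [Module k V] {ι : Type} [Fintype ι]

/-- The orbit of `f : Fin d → ι` under precomposition with permutations, as a finset. -/
noncomputable def orbitFinset (d : ℕ) {ι : Type} [Fintype ι] (f : Fin d → ι) :
    Finset (Fin d → ι) :=
  Finset.univ.filter (fun g : Fin d → ι => ∃ σ : Equiv.Perm (Fin d), g = f ∘ σ)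

theorem mem_orbitFinset {f g : Fin d → ι} :
    g ∈ orbitFinset d f ↔ ∃ σ : Equiv.Perm (Fin d), g = f ∘ σ := by
  simp [orbitFinset]

theorem self_mem_orbitFinset (f : Fin d → ι) : f ∈ orbitFinset d f :=
  mem_orbitFinset.2 ⟨1, rfl⟩

theorem comp_mem_orbitFinset {f g : Fin d → ι} (h : g ∈ orbitFinset d f)
    (π : Equiv.Perm (Fin d)) : g ∘ π ∈ orbitFinset d f := by
  obtain ⟨σ, rfl⟩ := mem_orbitFinset.1 h
  exact mem_orbitFinset.2 ⟨π.trans σ, rfl⟩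

theorem orbitFinset_eq_of_mem {f g : Fin d → ι} (h : g ∈ orbitFinset d f) :
    orbitFinset d g = orbitFinset d f := by
  obtain ⟨σ, rfl⟩ := mem_orbitFinset.1 h
  ext h'
  simp only [mem_orbitFinset]
  constructor
  · rintro ⟨τ, rfl⟩; exact ⟨τ.trans σ, rfl⟩
  · rintro ⟨τ, rfl⟩
    refine ⟨τ.trans σ.symm, ?_⟩
    funext x
    simp

theorem orbitSum_def (d : ℕ) (b : Module.Basis ι k V) (f : Fin d → ι) :
    orbitSum k d b f = ∑ g ∈ orbitFinset d f, PiTensorProduct.tprod k (fun i => b (g i)) :=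
  rfl

theorem orbitSum_eq_of_mem (b : Module.Basis ι k V) {f g : Fin d → ι}
    (h : g ∈ orbitFinset d f) : orbitSum k d b g = orbitSum k d b f := by
  rw [orbitSum_def, orbitSum_def, orbitFinset_eq_of_mem h]

/-- The coordinate functional at `g : Fin d → ι` on the tensor power. -/
noncomputable def coordT (b : Module.Basis ι k V) (g : Fin d → ι) :
    (⨂[k] (_ : Fin d), V) →ₗ[k] k :=
  PiTensorProduct.lift ((MultilinearMap.mkPiAlgebra k (Fin d) k).compLinearMap
    (fun i => b.coord (g i)))

theorem coordT_tprod (b : Module.Basis ι k V) (g : Fin d → ι) (v : Fin d → V) :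
    coordT b g (PiTensorProduct.tprod k v) = ∏ i, b.repr (v i) (g i) := by
  simp [coordT, Module.Basis.coord]

theorem coordT_tprod_basis (b : Module.Basis ι k V) (g h : Fin d → ι) :
    coordT b g (PiTensorProduct.tprod k (fun i => b (h i))) = if h = g then 1 else 0 := by
  rw [coordT_tprod]
  by_cases hg : h = g
  · subst hg
    simp
  · rw [if_neg hg]
    obtain ⟨i, hi⟩ := Function.ne_iff.1 hg
    exact Finset.prod_eq_zero (Finset.mem_univ i) (by simp [Module.Basis.repr_self, Finsupp.single_apply, hi])

theorem permTensorMap_tprod (σ : Equiv.Perm (Fin d)) (v : Fin d → V) :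
    permTensorMap k d V σ (PiTensorProduct.tprod k v)
      = PiTensorProduct.tprod k (fun i => v (σ.symm i)) := by
  simp [permTensorMap, PiTensorProduct.reindex_tprod]

theorem coordT_comp_perm (b : Module.Basis ι k V) (g : Fin d → ι) (σ : Equiv.Perm (Fin d)) :
    (coordT b g).comp (permTensorMap k d V σ) = coordT b (g ∘ σ) := by
  apply PiTensorProduct.ext
  apply MultilinearMap.ext
  intro v
  simp only [LinearMap.compMultilinearMap_apply, LinearMap.comp_apply, permTensorMap_tprod,
    coordT_tprod]
  calc ∏ i, (b.repr (v (σ.symm i))) (g i)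
      = ∏ j, (b.repr (v (σ.symm (σ j)))) (g (σ j)) := (Equiv.prod_comp σ _).symm
    _ = ∏ j, (b.repr (v j)) ((g ∘ σ) j) := by simp

theorem coordT_perm_apply (b : Module.Basis ι k V) (g : Fin d → ι) (σ : Equiv.Perm (Fin d))
    (x : ⨂[k] (_ : Fin d), V) :
    coordT b g (permTensorMap k d V σ x) = coordT b (g ∘ σ) x := by
  rw [← coordT_comp_perm b g σ]; rfl

/-- Expansion of an arbitrary element in terms of basis pure tensors. -/
theorem coordT_expansion (b : Module.Basis ι k V) (x : ⨂[k] (_ : Fin d), V) :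
    x = ∑ g : Fin d → ι, coordT b g x • PiTensorProduct.tprod k (fun i => b (g i)) := by
  have key : (LinearMap.id : (⨂[k] (_ : Fin d), V) →ₗ[k] _)
      = ∑ g : Fin d → ι, (coordT b g).smulRight (PiTensorProduct.tprod k (fun i => b (g i))) := by
    apply PiTensorProduct.ext
    apply MultilinearMap.ext
    intro v
    simp only [LinearMap.compMultilinearMap_apply, LinearMap.id_apply, LinearMap.sum_apply,
      LinearMap.smulRight_apply, coordT_tprod]
    conv_lhs => rw [show v = fun i => ∑ j : ι, b.repr (v i) j • b j from
      funext fun i => (b.sum_repr (v i)).symm]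
    rw [MultilinearMap.map_sum]
    exact Finset.sum_congr rfl fun g _ => MultilinearMap.map_smul_univ _ _ _
  have hx := LinearMap.congr_fun key x
  simpa only [LinearMap.id_apply, LinearMap.sum_apply, LinearMap.smulRight_apply] using hx

theorem coordT_orbitSum (b : Module.Basis ι k V) (f h : Fin d → ι) :
    coordT b h (orbitSum k d b f) = if h ∈ orbitFinset d f then 1 else 0 := by
  rw [orbitSum_def, map_sum]
  simp_rw [coordT_tprod_basis]
  exact Finset.sum_ite_eq' (orbitFinset d f) h (fun _ => (1 : k))

theorem orbitSum_invariant (b : Module.Basis ι k V) (f : Fin d → ι) (σ : Equiv.Perm (Fin d)) :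
    permTensorMap k d V σ (orbitSum k d b f) = orbitSum k d b f := by
  rw [orbitSum_def, map_sum]
  simp_rw [permTensorMap_tprod]
  refine Finset.sum_nbij' (fun g => g ∘ σ.symm) (fun g => g ∘ σ)
    (fun g hg => comp_mem_orbitFinset hg σ.symm) (fun g hg => comp_mem_orbitFinset hg σ)
    (fun g _ => by funext i; simp) (fun g _ => by funext i; simp) (fun g _ => rfl)

/-- The orbit equivalence relation as a setoid. -/
def orbitSetoid (d : ℕ) (ι : Type) [Fintype ι] : Setoid (Fin d → ι) where
  r f g := ∃ σ : Equiv.Perm (Fin d), g = f ∘ σ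
  iseqv := by
    constructor
    · exact fun f => ⟨1, rfl⟩
    · rintro f g ⟨σ, rfl⟩
      exact ⟨σ.symm, by funext x; simp⟩
    · rintro f g h ⟨σ, rfl⟩ ⟨τ, rfl⟩
      exact ⟨τ.trans σ, rfl⟩

theorem mem_orbitFinset_iff_quot (f g : Fin d → ι) :
    g ∈ orbitFinset d f ↔
      Quotient.mk (orbitSetoid d ι) g = Quotient.mk (orbitSetoid d ι) f := by
  rw [mem_orbitFinset, Quotient.eq]
  exact ⟨fun ⟨σ, h⟩ => (orbitSetoid d ι).symm ⟨σ, h⟩, fun h => (orbitSetoid d ι).symm h⟩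

end Aux

/-- The orbit sums of pure tensors of basis vectors form a `k`-basis of the
module of symmetric tensors `(V^{⊗d})^{S_d}`: they span it and are linearly independent. -/
theorem statement1 (d : ℕ) (V : Type) [AddCommGroup V] [Module k V]
    (ι : Type) [Fintype ι] (b : Module.Basis ι k V) :
    Submodule.span k (Set.range (orbitSum k d b)) = dividedPower k d V ∧
      LinearIndependent k ((↑) : (Set.range (orbitSum k d b)) → ⨂[k] (_ : Fin d), V) := by
  constructor
  · -- span = dividedPower
    apply le_antisymm
    · rw [Submodule.span_le]
      rintro _ ⟨f, rfl⟩
      simp only [dividedPower, SetLike.mem_coe, Submodule.mem_iInf, LinearMap.mem_ker,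
        LinearMap.sub_apply, LinearMap.id_apply, sub_eq_zero]
      intro σ
      exact orbitSum_invariant b f σ
    · intro x hx
      have hinv : ∀ σ : Equiv.Perm (Fin d), permTensorMap k d V σ x = x := by
        intro σ
        have h1 := (Submodule.mem_iInf
          (fun σ => LinearMap.ker (permTensorMap k d V σ - LinearMap.id))).1 hx σ
        rw [LinearMap.mem_ker, LinearMap.sub_apply, LinearMap.id_apply, sub_eq_zero] at h1
        exact h1
      have hconst : ∀ (g : Fin d → ι) (σ : Equiv.Perm (Fin d)),
          coordT b (g ∘ σ) x = coordT b g x := by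
        intro g σ
        rw [← coordT_perm_apply b g σ x, hinv σ]
      haveI : Fintype (Quotient (orbitSetoid d ι)) := Fintype.ofFinite _
      have hexp : x = ∑ q : Quotient (orbitSetoid d ι),
          coordT b q.out x • orbitSum k d b q.out := by
        conv_lhs => rw [coordT_expansion b x]
        rw [← Finset.sum_fiberwise Finset.univ (fun g : Fin d → ι => Quotient.mk (orbitSetoid d ι) g)
          (fun g => coordT b g x • PiTensorProduct.tprod k (fun i => b (g i)))]
        refine Finset.sum_congr rfl fun q _ => ?_
        have hfib : Finset.univ.filter
            (fun g : Fin d → ι => Quotient.mk (orbitSetoid d ι) g = q)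
            = orbitFinset d q.out := by
          ext g
          rw [Finset.mem_filter, mem_orbitFinset_iff_quot]
          simp [Quotient.out_eq]
        rw [hfib, orbitSum_def, Finset.smul_sum]
        refine Finset.sum_congr rfl fun g hg => ?_
        obtain ⟨σ, rfl⟩ := mem_orbitFinset.1 hg
        rw [hconst q.out σ]
      rw [hexp]
      exact Submodule.sum_mem _ fun q _ => Submodule.smul_mem _ _
        (Submodule.subset_span (Set.mem_range_self _))
  · -- linear independence
    rw [linearIndependent_iff'']
    intro s c hc hsum x
    by_cases hxs : x ∈ s
    · obtain ⟨f, hf⟩ := x.2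
      have happ := congrArg (coordT b f) hsum
      rw [map_sum, map_zero] at happ
      have hone : coordT b f (x : ⨂[k] (_ : Fin d), V) = 1 := by
        rw [← hf, coordT_orbitSum, if_pos (self_mem_orbitFinset f)]
      have hzero : ∀ y ∈ s, y ≠ x → coordT b f (y : ⨂[k] (_ : Fin d), V) = 0 := by
        intro y _ hyx
        obtain ⟨h, hh⟩ := y.2
        rw [← hh, coordT_orbitSum, if_neg]
        intro hmem
        exact hyx (Subtype.ext (by rw [← hh, ← hf]; exact (orbitSum_eq_of_mem b hmem).symm))
      have hsingle : ∑ y ∈ s, coordT b f (c y • (y : ⨂[k] (_ : Fin d), V)) = c x := by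
        rw [Finset.sum_eq_single_of_mem x hxs]
        · rw [map_smul, smul_eq_mul, hone, mul_one]
        · intro y hy hyx
          rw [map_smul, smul_eq_mul, hzero y hy hyx, mul_zero]
      rw [← hsingle]
      exact happ
    · exact hc x hxs
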